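/- Under mirror descent ∇ψ(w_{t+1}) = ∇ψ(w_t) − η∇L(w_t) with ψ differentiable β-absolutely homogeneous and L convex differentiable, the following inequality holds: (β−1)ψ(w_{t+1}) − (β−1)ψ(w_t) + η·L(w_{t+1}) − η·L(w_t) ≤ ⟨−η∇L(w_t), w_t⟩, provided ψ − ηL is convex. -/

import Mathlib

open RealInnerProductSpace

section Aux

variable {d : ℕ}

/-- Directional derivative from a gradient. -/
lemma aux_hasDerivAt_line (f : EuclideanSpace ℝ (Fin d) → ℝ)
    (g x v : EuclideanSpace ℝ (Fin d)) (c : ℝ)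
    (hf : HasGradientAt f g (x + c • v)) :
    HasDerivAt (fun t : ℝ => f (x + t • v)) ⟪g, v⟫ c := by
  have hcurve : HasDerivAt (fun t : ℝ => x + t • v) v c := by
    simpa using ((hasDerivAt_id c).smul_const v).const_add x
  have := (hf.hasFDerivAt).comp_hasDerivAt c hcurve
  simp [InnerProductSpace.toDual_apply_apply] at this
  exact this

/-- Subgradient inequality for convex differentiable functions. -/
lemma aux_subgrad (f : EuclideanSpace ℝ (Fin d) → ℝ)
    (hconv : ConvexOn ℝ Set.univ f)
    (g x : EuclideanSpace ℝ (Fin d)) (hg : HasGradientAt f g x)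
    (y : EuclideanSpace ℝ (Fin d)) :
    f x + ⟪g, y - x⟫ ≤ f y := by
  set v := y - x with hv
  have hconv' : ConvexOn ℝ Set.univ (fun t : ℝ => f (x + t • v)) := by
    have := hconv.comp_affineMap (AffineMap.lineMap x (x + v) : ℝ →ᵃ[ℝ] _)
    simpa [Function.comp_def, AffineMap.lineMap_apply, add_comm] using this
  have hderiv : HasDerivAt (fun t : ℝ => f (x + t • v)) ⟪g, v⟫ 0 := by
    apply aux_hasDerivAt_line
    simpa using hg
  have hslope := hconv'.le_slope_of_hasDerivAt (Set.mem_univ (0:ℝ)) (Set.mem_univ (1:ℝ))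
    one_pos hderiv
  have h0 : x + (0:ℝ) • v = x := by simp
  have h1 : x + (1:ℝ) • v = y := by simp [hv]
  rw [slope_def_field] at hslope
  simp only [h0, h1] at hslope
  have : ⟪g, v⟫ ≤ f y - f x := by
    simpa [div_one] using hslope
  linarith

/-- Euler's relation for β-absolutely homogeneous functions. -/
lemma aux_euler (f : EuclideanSpace ℝ (Fin d) → ℝ) (β : ℝ) (hβ : 1 < β)
    (hhomog : ∀ (c : ℝ) x, f (c • x) = |c| ^ β * f x)
    (g x : EuclideanSpace ℝ (Fin d)) (hg : HasGradientAt f g x) :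
    ⟪g, x⟫ = β * f x := by
  have h1 : HasDerivAt (fun t : ℝ => f (t • x)) ⟪g, x⟫ 1 := by
    have := aux_hasDerivAt_line f g 0 x 1 (by simpa using hg)
    simpa using this
  have h2 : HasDerivAt (fun t : ℝ => f (t • x)) (β * f x) 1 := by
    have hr : HasDerivAt (fun t : ℝ => t ^ β * f x) (β * f x) 1 := by
      have := (Real.hasDerivAt_rpow_const (x := (1:ℝ)) (p := β)
        (Or.inl one_ne_zero)).mul_const (f x)
      simpa using this
    have heq : (fun t : ℝ => f (t • x)) =ᶠ[nhds (1:ℝ)] fun t : ℝ => t ^ β * f x := by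
      filter_upwards [eventually_gt_nhds (by norm_num : (0:ℝ) < 1)] with t ht
      rw [hhomog t x, abs_of_pos ht]
    exact hr.congr_of_eventuallyEq heq
  exact h1.unique h2

end Aux

/-- Lower bound on the mirror descent update (Lemma 12). -/
theorem md_update_lower_bound {d : ℕ} (ψ L : EuclideanSpace ℝ (Fin d) → ℝ)
    (gψ gL : EuclideanSpace ℝ (Fin d) → EuclideanSpace ℝ (Fin d))
    (β : ℝ) (hβ : 1 < β)
    (hψconv : ConvexOn ℝ Set.univ ψ)
    (hhomog : ∀ (c : ℝ) x, ψ (c • x) = |c| ^ β * ψ x)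
    (hLconv : ConvexOn ℝ Set.univ L)
    (hψ : ∀ x, HasGradientAt ψ (gψ x) x)
    (hL : ∀ x, HasGradientAt L (gL x) x)
    (η : ℝ) (hη : 0 < η)
    (hconv : ConvexOn ℝ Set.univ (fun x => ψ x - η * L x))
    (wt wt1 : EuclideanSpace ℝ (Fin d))
    (hupdate : gψ wt1 = gψ wt - η • gL wt) :
    (β - 1) * ψ wt1 - (β - 1) * ψ wt + η * L wt1 - η * L wt
      ≤ ⟪-(η • gL wt), wt⟫ := by
  -- gradient of φ = ψ - η L at wt
  have hgφ : HasGradientAt (fun x => ψ x - η * L x) (gψ wt - η • gL wt) wt := by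
    rw [hasGradientAt_iff_hasFDerivAt]
    have h1 := (hψ wt).hasFDerivAt
    have h2 := (hL wt).hasFDerivAt.const_smul η
    have hdual : (InnerProductSpace.toDual ℝ (EuclideanSpace ℝ (Fin d)) (gψ wt - η • gL wt))
        = InnerProductSpace.toDual ℝ _ (gψ wt) - η • InnerProductSpace.toDual ℝ _ (gL wt) := by
      simp
    rw [hdual]
    exact h1.sub h2
  have hsub := aux_subgrad (fun x => ψ x - η * L x) hconv _ wt hgφ wt1
  have heuler1 := aux_euler ψ β hβ hhomog (gψ wt) wt (hψ wt)
  have heuler2 := aux_euler ψ β hβ hhomog (gψ wt1) wt1 (hψ wt1)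
  -- expand the inner product in hsub
  have hexp : ⟪gψ wt - η • gL wt, wt1 - wt⟫
      = β * ψ wt1 - ⟪gψ wt, wt⟫ + η * ⟪gL wt, wt⟫ := by
    rw [inner_sub_right, ← hupdate, heuler2]
    rw [hupdate, inner_sub_left, real_inner_smul_left]
    ring
  rw [hexp, heuler1] at hsub
  have hrhs : ⟪-(η • gL wt), wt⟫ = -(η * ⟪gL wt, wt⟫) := by
    rw [inner_neg_left, real_inner_smul_left]
  rw [hrhs]
  linarith
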